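/- arXiv:2505.16247 — 5 statements merged into one kernel-verified Lean document; each statement's English description precedes it below -/
import Mathlib

section
/- Let B = conv{b_0,...,b_n} and C = conv{c_0,...,c_n} be two orthoschemes in R^n with b_0 = c_0 = 0 and |b_k| ≥ |c_k| for all k. Then the affine map f : R^n → R^n determined by f(b_k) = c_k satisfies |f(x)| ≤ |x| for every x ∈ B. -/
open scoped RealInnerProductSpace

/-- A simplex with vertices `p 0, ..., p n` is an *orthoscheme* if for every `k`,
the affine span of `p 0, ..., p k` is orthogonal to the affine span of
`p k, ..., p n`, i.e. all vectors `p i - p k` with `i ≤ k` are orthogonal to all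
vectors `p j - p k` with `k ≤ j`. -/
def IsOrthoscheme {n : ℕ} (p : Fin (n + 1) → EuclideanSpace ℝ (Fin n)) : Prop :=
  ∀ k i j : Fin (n + 1), i ≤ k → k ≤ j → ⟪p i - p k, p j - p k⟫ = 0

/-- In an orthoscheme with `p 0 = 0`, the inner product of two vertices is the
squared norm of the earlier one. -/
lemma isOrthoscheme_inner_eq {n : ℕ} {p : Fin (n + 1) → EuclideanSpace ℝ (Fin n)}
    (hp : IsOrthoscheme p) (hp0 : p 0 = 0) {k l : Fin (n + 1)} (hkl : k ≤ l) :
    ⟪p k, p l⟫ = ‖p k‖ ^ 2 := by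
  have h := hp k 0 l (Fin.zero_le k) hkl
  rw [hp0, zero_sub, inner_neg_left, inner_sub_right, neg_sub] at h
  have : ⟪p k, p l⟫ = ⟪p k, p k⟫ := by linarith
  rw [this, real_inner_self_eq_norm_sq]

theorem orthoscheme_affine_map_norm_nonincreasing (n : ℕ)
    (b c : Fin (n + 1) → EuclideanSpace ℝ (Fin n))
    (hB : IsOrthoscheme b) (hC : IsOrthoscheme c)
    (hBnd : AffineIndependent ℝ b) (hCnd : AffineIndependent ℝ c)
    (hb0 : b 0 = 0) (hc0 : c 0 = 0)
    (hnorm : ∀ k, ‖c k‖ ≤ ‖b k‖)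
    (f : EuclideanSpace ℝ (Fin n) →ᵃ[ℝ] EuclideanSpace ℝ (Fin n))
    (hf : ∀ k, f (b k) = c k) :
    ∀ x ∈ convexHull ℝ (Set.range b), ‖f x‖ ≤ ‖x‖ := by
  intro x hx
  rw [convexHull_range_eq_exists_affineCombination] at hx
  obtain ⟨s, w, hw0, hw1, rfl⟩ := hx
  -- expressions as linear combinations
  have hxb : s.affineCombination ℝ b w = ∑ i ∈ s, w i • b i :=
    s.affineCombination_eq_linear_combination b w hw1
  have hxc : f (s.affineCombination ℝ b w) = ∑ i ∈ s, w i • c i := by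
    rw [Finset.map_affineCombination s b w hw1 f,
      s.affineCombination_eq_linear_combination _ w hw1]
    simp only [Function.comp, hf]
  -- compare inner products of vertices
  have key : ∀ i j : Fin (n + 1), ⟪c i, c j⟫ ≤ ⟪b i, b j⟫ := by
    intro i j
    rcases le_total i j with hij | hij
    · rw [isOrthoscheme_inner_eq hB hb0 hij, isOrthoscheme_inner_eq hC hc0 hij]
      exact pow_le_pow_left₀ (norm_nonneg _) (hnorm i) 2
    · rw [real_inner_comm (c j) (c i), real_inner_comm (b j) (b i),
        isOrthoscheme_inner_eq hB hb0 hij, isOrthoscheme_inner_eq hC hc0 hij]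
      exact pow_le_pow_left₀ (norm_nonneg _) (hnorm j) 2
  -- expansion of squared norms
  have expand : ∀ p : Fin (n + 1) → EuclideanSpace ℝ (Fin n),
      ‖∑ i ∈ s, w i • p i‖ ^ 2 = ∑ i ∈ s, ∑ j ∈ s, w j * (w i * ⟪p i, p j⟫) := by
    intro p
    rw [← real_inner_self_eq_norm_sq, sum_inner]
    simp only [real_inner_smul_left, inner_sum, real_inner_smul_right, Finset.mul_sum]
  have hsq : ‖f (s.affineCombination ℝ b w)‖ ^ 2 ≤ ‖s.affineCombination ℝ b w‖ ^ 2 := by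
    rw [hxc, hxb, expand, expand]
    refine Finset.sum_le_sum fun i hi => Finset.sum_le_sum fun j hj => ?_
    exact mul_le_mul_of_nonneg_left
      (mul_le_mul_of_nonneg_left (key i j) (hw0 i hi)) (hw0 j hj)
  have := Real.sqrt_le_sqrt hsq
  rwa [Real.sqrt_sq (norm_nonneg _), Real.sqrt_sq (norm_nonneg _)] at this
end

section
/- Let B and C be orthoschemes in R^n with b_0 = c_0 = 0 and |b_k| ≥ |c_k| for all k. Then for any r > 0, vol(B)/vol(B ∩ B_0(r)) ≥ vol(C)/vol(C ∩ B_0(r)), where B_0(r) is the closed ball of radius r centered at the origin. -/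
open scoped RealInnerProductSpace
open MeasureTheory

lemma ortho_inner_eq {n : ℕ} (p : Fin (n + 1) → EuclideanSpace ℝ (Fin n))
    (hp : IsOrthoscheme p) (h0 : p 0 = 0) (k l : Fin (n + 1)) :
    ⟪p k, p l⟫ = ‖p (min k l)‖ ^ 2 := by
  have key : ∀ k l : Fin (n + 1), k ≤ l → ⟪p k, p l⟫ = ‖p k‖ ^ 2 := by
    intro k l hkl
    have h := hp k 0 l (Fin.zero_le k) hkl
    rw [h0, zero_sub, inner_neg_left, neg_eq_zero, inner_sub_right, sub_eq_zero] at h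
    rw [h, real_inner_self_eq_norm_sq]
  rcases le_total k l with h | h
  · rw [min_eq_left h, key k l h]
  · rw [min_eq_right h, real_inner_comm, key l k h]

lemma ortho_norm_sq_sum {n : ℕ} (p : Fin (n + 1) → EuclideanSpace ℝ (Fin n))
    (hp : IsOrthoscheme p) (h0 : p 0 = 0) (s : Finset (Fin (n + 1))) (w : Fin (n + 1) → ℝ) :
    ‖∑ i ∈ s, w i • p i‖ ^ 2 = ∑ i ∈ s, ∑ j ∈ s, w i * w j * ‖p (min i j)‖ ^ 2 := by
  rw [← real_inner_self_eq_norm_sq, sum_inner]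
  refine Finset.sum_congr rfl fun i hi => ?_
  rw [inner_sum]
  refine Finset.sum_congr rfl fun j hj => ?_
  rw [real_inner_smul_left, real_inner_smul_right, ortho_inner_eq p hp h0 i j, mul_assoc]

lemma ortho_norm_le {n : ℕ} (b c : Fin (n + 1) → EuclideanSpace ℝ (Fin n))
    (hB : IsOrthoscheme b) (hC : IsOrthoscheme c) (hb0 : b 0 = 0) (hc0 : c 0 = 0)
    (hnorm : ∀ k, ‖c k‖ ≤ ‖b k‖) (s : Finset (Fin (n + 1))) (w : Fin (n + 1) → ℝ)
    (hw : ∀ i ∈ s, 0 ≤ w i) :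
    ‖∑ i ∈ s, w i • c i‖ ≤ ‖∑ i ∈ s, w i • b i‖ := by
  have hsq : ‖∑ i ∈ s, w i • c i‖ ^ 2 ≤ ‖∑ i ∈ s, w i • b i‖ ^ 2 := by
    rw [ortho_norm_sq_sum c hC hc0 s w, ortho_norm_sq_sum b hB hb0 s w]
    refine Finset.sum_le_sum fun i hi => Finset.sum_le_sum fun j hj => ?_
    exact mul_le_mul_of_nonneg_left
      (pow_le_pow_left₀ (norm_nonneg _) (hnorm (min i j)) 2)
      (mul_nonneg (hw i hi) (hw j hj))
  calc ‖∑ i ∈ s, w i • c i‖ = Real.sqrt (‖∑ i ∈ s, w i • c i‖ ^ 2) := by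
        rw [Real.sqrt_sq (norm_nonneg _)]
    _ ≤ Real.sqrt (‖∑ i ∈ s, w i • b i‖ ^ 2) := Real.sqrt_le_sqrt hsq
    _ = ‖∑ i ∈ s, w i • b i‖ := Real.sqrt_sq (norm_nonneg _)

theorem orthoscheme_volume_ratio (n : ℕ)
    (b c : Fin (n + 1) → EuclideanSpace ℝ (Fin n))
    (hB : IsOrthoscheme b) (hC : IsOrthoscheme c)
    (hBnd : AffineIndependent ℝ b) (hCnd : AffineIndependent ℝ c)
    (hb0 : b 0 = 0) (hc0 : c 0 = 0)
    (hnorm : ∀ k, ‖c k‖ ≤ ‖b k‖) (r : ℝ) (hr : 0 < r) :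
    volume (convexHull ℝ (Set.range c)) /
        volume (convexHull ℝ (Set.range c) ∩ Metric.closedBall 0 r) ≤
      volume (convexHull ℝ (Set.range b)) /
        volume (convexHull ℝ (Set.range b) ∩ Metric.closedBall 0 r) := by
  classical
  -- linear independence of the nonzero vertices
  have hli : ∀ (p : Fin (n + 1) → EuclideanSpace ℝ (Fin n)), AffineIndependent ℝ p → p 0 = 0 →
      LinearIndependent ℝ (fun i : Fin n => p i.succ) := by
    intro p hp h0
    have h := (affineIndependent_iff_linearIndependent_vsub ℝ p 0).mp hp
    have h2 : LinearIndependent ℝ (fun i : {x : Fin (n + 1) // x ≠ 0} => p ↑i) := by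
      simpa [h0] using h
    have hinj : Function.Injective
        (fun i : Fin n => (⟨i.succ, Fin.succ_ne_zero i⟩ : {x : Fin (n + 1) // x ≠ 0})) := by
      intro i j hij
      simpa [Fin.succ_inj] using congrArg Subtype.val hij
    exact h2.comp (fun i : Fin n => (⟨i.succ, Fin.succ_ne_zero i⟩ : {x : Fin (n + 1) // x ≠ 0})) hinj
  have hcard : Fintype.card (Fin n) = Module.finrank ℝ (EuclideanSpace ℝ (Fin n)) := by simp
  let basB : Module.Basis (Fin n) ℝ (EuclideanSpace ℝ (Fin n)) :=
    Module.Basis.mk (hli b hBnd hb0) ((hli b hBnd hb0).span_eq_top_of_card_eq_finrank' hcard).ge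
  let basC : Module.Basis (Fin n) ℝ (EuclideanSpace ℝ (Fin n)) :=
    Module.Basis.mk (hli c hCnd hc0) ((hli c hCnd hc0).span_eq_top_of_card_eq_finrank' hcard).ge
  let g : EuclideanSpace ℝ (Fin n) ≃ₗ[ℝ] EuclideanSpace ℝ (Fin n) :=
    basB.equiv basC (Equiv.refl _)
  let f : EuclideanSpace ℝ (Fin n) →ₗ[ℝ] EuclideanSpace ℝ (Fin n) := g.toLinearMap
  have hfb : ∀ k, f (b k) = c k := by
    intro k
    refine Fin.cases ?_ (fun j => ?_) k
    · rw [hb0, map_zero, hc0]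
    · have h1 : basB j = b j.succ := by
        simp [basB, Module.Basis.mk_apply]
      have h2 : basC j = c j.succ := by
        simp [basC, Module.Basis.mk_apply]
      rw [← h1, ← h2]
      exact basB.equiv_apply j basC (Equiv.refl _)
  have himg : f '' (convexHull ℝ (Set.range b)) = convexHull ℝ (Set.range c) := by
    rw [f.image_convexHull, ← Set.range_comp]
    rw [show ⇑f ∘ b = c from funext hfb]
  -- f maps B ∩ ball into C ∩ ball
  have hsub : f '' (convexHull ℝ (Set.range b) ∩ Metric.closedBall 0 r) ⊆
      convexHull ℝ (Set.range c) ∩ Metric.closedBall 0 r := by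
    rintro _ ⟨x, ⟨hx1, hx2⟩, rfl⟩
    refine ⟨himg ▸ Set.mem_image_of_mem f hx1, ?_⟩
    rw [Metric.mem_closedBall, dist_zero_right] at hx2 ⊢
    rw [convexHull_range_eq_exists_affineCombination] at hx1
    obtain ⟨s, w, hw0, hw1, rfl⟩ := hx1
    rw [Finset.affineCombination_eq_linear_combination _ _ _ hw1] at hx2 ⊢
    have hmap : f (∑ i ∈ s, w i • b i) = ∑ i ∈ s, w i • c i := by
      rw [map_sum]
      exact Finset.sum_congr rfl fun i _ => by rw [f.map_smul, hfb]
    rw [hmap]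
    exact le_trans (ortho_norm_le b c hB hC hb0 hc0 hnorm s w hw0) hx2
  -- volume computations
  set d : ENNReal := ENNReal.ofReal |LinearMap.det f| with hd
  have hd0 : d ≠ 0 := by
    rw [hd]
    simp only [ne_eq, ENNReal.ofReal_eq_zero, not_le]
    exact abs_pos.mpr (LinearEquiv.isUnit_det' g).ne_zero
  have hBC : volume (convexHull ℝ (Set.range c)) = d * volume (convexHull ℝ (Set.range b)) := by
    rw [← himg, Measure.addHaar_image_linearMap]
  have hcap : d * volume (convexHull ℝ (Set.range b) ∩ Metric.closedBall 0 r) ≤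
      volume (convexHull ℝ (Set.range c) ∩ Metric.closedBall 0 r) := by
    rw [← Measure.addHaar_image_linearMap]
    exact measure_mono hsub
  calc volume (convexHull ℝ (Set.range c)) /
        volume (convexHull ℝ (Set.range c) ∩ Metric.closedBall 0 r)
      ≤ volume (convexHull ℝ (Set.range c)) /
        (d * volume (convexHull ℝ (Set.range b) ∩ Metric.closedBall 0 r)) :=
      ENNReal.div_le_div_left hcap _
    _ = (d * volume (convexHull ℝ (Set.range b))) /
        (d * volume (convexHull ℝ (Set.range b) ∩ Metric.closedBall 0 r)) := by rw [hBC]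
    _ = volume (convexHull ℝ (Set.range b)) /
        volume (convexHull ℝ (Set.range b) ∩ Metric.closedBall 0 r) :=
      ENNReal.mul_div_mul_left _ _ hd0 ENNReal.ofReal_ne_top
end

section
/- Let C ⊂ R^n be the simplex with vertices c_0 = 0 and c_k = (1,...,1,0,...,0) (k ones followed by n-k zeros) for k = 1,...,n. Then vol(C ∩ B_0(1))/vol(C) = vol(B_0(1))/2^n, where B_0(1) is the unit ball centered at the origin. -/
open MeasureTheory

namespace Orthoscheme

open Set

variable {n : ℕ}

def sg (b : Bool) : ℝ := if b then 1 else -1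

lemma sg_sq (b : Bool) (r : ℝ) : sg b * (sg b * r) = r := by cases b <;> simp [sg]

lemma abs_sg_mul (b : Bool) (r : ℝ) : |sg b * r| = |r| := by cases b <;> simp [sg]

lemma sg_decide (r : ℝ) : sg (decide (0 ≤ r)) * r = |r| := by
  by_cases h : 0 ≤ r
  · simp [h, sg, abs_of_nonneg h]
  · simp [h, sg, abs_of_neg (lt_of_not_ge h)]

def oS (n : ℕ) : Set (Fin n → ℝ) :=
  {x | (∀ i j : Fin n, i ≤ j → x j ≤ x i) ∧ ∀ i, x i ∈ Icc (0:ℝ) 1}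

def oT (σ : Equiv.Perm (Fin n)) (ε : Fin n → Bool) (x : Fin n → ℝ) : Fin n → ℝ :=
  fun i => sg (ε i) * x (σ i)

def Bp (n : ℕ) : Set (Fin n → ℝ) := {x | ∑ i, x i ^ 2 ≤ 1}

def Qp (n : ℕ) : Set (Fin n → ℝ) := {x | ∀ i, |x i| ≤ 1}

lemma measurableSet_oS : MeasurableSet (oS n) := by
  apply MeasurableSet.inter
  · have : (fun x : Fin n → ℝ => ∀ i j : Fin n, i ≤ j → x j ≤ x i)
        = ⋂ i, ⋂ j, {x : Fin n → ℝ | i ≤ j → x j ≤ x i} := by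
      ext x; constructor
      · intro h; exact Set.mem_iInter.2 fun i => Set.mem_iInter.2 fun j => h i j
      · intro h i j; exact Set.mem_iInter.1 (Set.mem_iInter.1 h i) j
    rw [this]
    refine MeasurableSet.iInter fun i => ?_
    refine MeasurableSet.iInter fun j => ?_
    by_cases h : i ≤ j
    · simp only [h, forall_true_left]
      exact measurableSet_le (measurable_pi_apply j) (measurable_pi_apply i)
    · simp [h]
  · have : (fun x : Fin n → ℝ => ∀ i : Fin n, x i ∈ Icc (0:ℝ) 1)
        = ⋂ i, {x : Fin n → ℝ | x i ∈ Icc (0:ℝ) 1} := by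
      ext x; constructor
      · intro h; exact Set.mem_iInter.2 fun i => h i
      · intro h i; exact Set.mem_iInter.1 h i
    rw [this]
    exact MeasurableSet.iInter fun i =>
      (measurable_pi_apply i) measurableSet_Icc

lemma measurableSet_Bp : MeasurableSet (Bp n) := by
  have : Measurable fun x : Fin n → ℝ => ∑ i, x i ^ 2 := by
    exact Finset.measurable_sum _ fun i _ => (measurable_pi_apply i).pow_const 2
  exact measurableSet_le this measurable_const

lemma measurableSet_Qp : MeasurableSet (Qp n) := by
  rw [show Qp n = {x : Fin n → ℝ | ∀ i, |x i| ≤ 1} from rfl, setOf_forall]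
  exact MeasurableSet.iInter fun i =>
    measurableSet_le ((measurable_pi_apply i).abs) measurable_const

lemma oT_measurePreserving (σ : Equiv.Perm (Fin n)) (ε : Fin n → Bool) :
    MeasurePreserving (oT σ ε) volume volume := by
  have key : ⇑(MeasurableEquiv.piCongrLeft (fun _ : Fin n => ℝ) σ.symm)
      = fun x : Fin n → ℝ => x ∘ σ := by
    funext x
    funext j
    rw [MeasurableEquiv.coe_piCongrLeft]
    have := Equiv.piCongrLeft_apply_apply (fun _ : Fin n => ℝ) σ.symm x (σ j)
    simpa using this

  have h1 : MeasurePreserving (fun x : Fin n → ℝ => x ∘ σ) volume volume := by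
    rw [← key]; exact volume_measurePreserving_piCongrLeft _ _
  have h2 : MeasurePreserving (fun x : Fin n → ℝ => fun i => sg (ε i) * x i)
      volume volume := by
    apply volume_preserving_pi
    intro i
    show MeasurePreserving (fun r : ℝ => sg (ε i) * r) volume volume
    cases hεi : ε i
    · have : (fun r : ℝ => sg false * r) = fun r : ℝ => -r := by
        funext r; simp [sg]
      rw [this]
      exact Measure.measurePreserving_neg _
    · have : (fun r : ℝ => sg true * r) = id := by funext r; simp [sg]
      rw [this]
      exact MeasurePreserving.id _
  exact h2.comp h1

lemma oT_preimage_Bp (σ : Equiv.Perm (Fin n)) (ε : Fin n → Bool) :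
    oT σ ε ⁻¹' Bp n = Bp n := by
  ext x
  show (∑ i, (sg (ε i) * x (σ i)) ^ 2 ≤ 1) ↔ _
  have : ∀ i : Fin n, (sg (ε i) * x (σ i)) ^ 2 = x (σ i) ^ 2 := by
    intro i; cases ε i <;> simp [sg] <;> ring
  rw [Finset.sum_congr rfl fun i _ => this i, Equiv.sum_comp σ (fun i => x i ^ 2)]
  rfl

lemma oT_preimage_Qp (σ : Equiv.Perm (Fin n)) (ε : Fin n → Bool) :
    oT σ ε ⁻¹' Qp n = Qp n := by
  ext x
  show (∀ i, |sg (ε i) * x (σ i)| ≤ 1) ↔ (∀ i, |x i| ≤ 1)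
  simp only [abs_sg_mul]
  exact ⟨fun h i => by simpa using h (σ.symm i), fun h i => h (σ i)⟩

lemma oT_left_inverse (σ : Equiv.Perm (Fin n)) (ε : Fin n → Bool) :
    Function.LeftInverse (oT σ.symm (ε ∘ σ.symm)) (oT σ ε) := by
  intro x; funext i
  show sg (ε (σ.symm i)) * (sg (ε (σ.symm i)) * x (σ (σ.symm i))) = x i
  rw [sg_sq, Equiv.apply_symm_apply]

lemma oT_right_inverse (σ : Equiv.Perm (Fin n)) (ε : Fin n → Bool) :
    Function.RightInverse (oT σ.symm (ε ∘ σ.symm)) (oT σ ε) := by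
  intro x; funext i
  show sg (ε i) * (sg (ε (σ.symm (σ i))) * x (σ.symm (σ i))) = x i
  rw [Equiv.symm_apply_apply, sg_sq]

def Np (n : ℕ) : Set (Fin n → ℝ) :=
  {x | ∃ i, x i = 0} ∪ {x | ∃ i j : Fin n, i ≠ j ∧ |x i| = |x j|}

lemma volume_Np : volume (Np n) = 0 := by
  have h0 : ∀ i : Fin n, volume {x : Fin n → ℝ | x i = 0} = 0 := by
    intro i
    have : {x : Fin n → ℝ | x i = 0}
        = (LinearMap.ker (LinearMap.proj i : (Fin n → ℝ) →ₗ[ℝ] ℝ) : Set (Fin n → ℝ)) := by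
      ext x; simp [LinearMap.mem_ker]
    rw [this]
    apply Measure.addHaar_submodule
    intro h
    have := h ▸ Submodule.mem_top (R := ℝ) (x := Function.update (0 : Fin n → ℝ) i 1)
    simp [LinearMap.mem_ker] at this
  have h1 : ∀ i j : Fin n, i ≠ j → volume {x : Fin n → ℝ | |x i| = |x j|} = 0 := by
    intro i j hij
    have hsub : {x : Fin n → ℝ | |x i| = |x j|} ⊆
        (LinearMap.ker ((LinearMap.proj i : (Fin n → ℝ) →ₗ[ℝ] ℝ) - LinearMap.proj j) : Set _)
        ∪ (LinearMap.ker ((LinearMap.proj i : (Fin n → ℝ) →ₗ[ℝ] ℝ) + LinearMap.proj j) : Set _) := by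
      intro x hx
      rcases abs_eq_abs.1 hx with h | h
      · left; simp [LinearMap.mem_ker, sub_eq_zero, h]
      · right; simp [LinearMap.mem_ker, h]
    refine measure_mono_null hsub (measure_union_null ?_ ?_) <;>
      refine Measure.addHaar_submodule _ _ fun h => ?_
    · have := h ▸ Submodule.mem_top (R := ℝ) (x := Function.update (0 : Fin n → ℝ) i 1)
      simp [LinearMap.mem_ker, Function.update_apply, hij.symm] at this
    · have := h ▸ Submodule.mem_top (R := ℝ) (x := Function.update (0 : Fin n → ℝ) i 1)
      simp [LinearMap.mem_ker, Function.update_apply, hij.symm] at this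
  apply measure_union_null
  · have : {x : Fin n → ℝ | ∃ i, x i = 0} = ⋃ i, {x : Fin n → ℝ | x i = 0} := by
      ext x; simp
    rw [this]
    exact measure_iUnion_null fun i => h0 i
  · have : {x : Fin n → ℝ | ∃ i j : Fin n, i ≠ j ∧ |x i| = |x j|}
        ⊆ ⋃ i, ⋃ j, {x : Fin n → ℝ | i ≠ j ∧ |x i| = |x j|} := by
      intro x ⟨i, j, h⟩
      exact Set.mem_iUnion.2 ⟨i, Set.mem_iUnion.2 ⟨j, h⟩⟩
    refine measure_mono_null this (measure_iUnion_null fun i => measure_iUnion_null fun j => ?_)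
    by_cases hij : i = j
    · simp [hij]
    · exact measure_mono_null (fun x hx => hx.2) (h1 i j hij)

lemma exists_piece {x : Fin n → ℝ} (hx : x ∈ Qp n) :
    ∃ (σ : Equiv.Perm (Fin n)) (ε : Fin n → Bool), oT σ ε x ∈ oS n := by
  classical
  set τ := Tuple.sort (fun i => -|x i|) with hτ
  refine ⟨τ, fun i => decide (0 ≤ x (τ i)), ?_⟩
  have hval : ∀ i, oT τ (fun i => decide (0 ≤ x (τ i))) x i = |x (τ i)| :=
    fun i => sg_decide _
  constructor
  · intro i j hij
    rw [hval i, hval j]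
    have := Tuple.monotone_sort (fun i => -|x i|) hij
    simpa using this
  · intro i
    rw [hval i]
    exact ⟨abs_nonneg _, hx _⟩

lemma piece_unique {x : Fin n → ℝ} (hx : x ∉ Np n)
    {σ σ' : Equiv.Perm (Fin n)} {ε ε' : Fin n → Bool}
    (h : oT σ ε x ∈ oS n) (h' : oT σ' ε' x ∈ oS n) : σ = σ' ∧ ε = ε' := by
  have hx0 : ∀ i, x i ≠ 0 := fun i hi => hx (Or.inl ⟨i, hi⟩)
  have hxinj : Function.Injective (fun i => |x i|) := by
    intro i j hij
    by_contra hne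
    exact hx (Or.inr ⟨i, j, hne, hij⟩)
  have key : ∀ (σ : Equiv.Perm (Fin n)) (ε : Fin n → Bool), oT σ ε x ∈ oS n →
      (∀ i, oT σ ε x i = |x (σ i)|) ∧ ∀ i, ε i = decide (0 ≤ x (σ i)) := by
    intro σ ε h
    have habs : ∀ i, oT σ ε x i = |x (σ i)| := by
      intro i
      have h1 : 0 ≤ oT σ ε x i := (h.2 i).1
      have h2 : |oT σ ε x i| = |x (σ i)| := abs_sg_mul _ _
      rw [abs_of_nonneg h1] at h2; exact h2
    refine ⟨habs, fun i => ?_⟩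
    have hne := hx0 (σ i)
    have hi := habs i
    cases hε : ε i with
    | false =>
      have hxi : -x (σ i) = |x (σ i)| := by
        have := hi
        simp [oT, hε, sg] at this
        linarith [this]
      have hneg : x (σ i) < 0 := by
        rcases lt_trichotomy (x (σ i)) 0 with h | h | h
        · exact h
        · exact absurd h hne
        · rw [abs_of_pos h] at hxi; linarith
      exact (decide_eq_false (not_le.2 hneg)).symm
    | true =>
      have hxi : x (σ i) = |x (σ i)| := by
        have := hi
        simp [oT, hε, sg] at this
        linarith [this]
      have : 0 ≤ x (σ i) := hxi ▸ abs_nonneg _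
      exact (decide_eq_true this).symm
  obtain ⟨habs, hε⟩ := key σ ε h
  obtain ⟨habs', hε'⟩ := key σ' ε' h'
  have hanti : StrictAnti (fun i => |x (σ i)|) := by
    apply Antitone.strictAnti_of_injective
    · intro i j hij
      have := h.1 i j hij
      rwa [habs i, habs j] at this
    · exact hxinj.comp σ.injective
  have hanti' : StrictAnti (fun i => |x (σ' i)|) := by
    apply Antitone.strictAnti_of_injective
    · intro i j hij
      have := h'.1 i j hij
      rwa [habs' i, habs' j] at this
    · exact hxinj.comp σ'.injective
  have hrange : Set.range (fun i => |x (σ i)|) = Set.range (fun i => |x (σ' i)|) := by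
    have e1 : Set.range ((fun i => |x i|) ∘ σ) = Set.range (fun i => |x i|) :=
      Function.Surjective.range_comp σ.surjective _
    have e2 : Set.range ((fun i => |x i|) ∘ σ') = Set.range (fun i => |x i|) :=
      Function.Surjective.range_comp σ'.surjective _
    calc Set.range (fun i => |x (σ i)|) = Set.range ((fun i => |x i|) ∘ σ) := rfl
      _ = Set.range ((fun i => |x i|) ∘ σ') := by rw [e1, e2]
      _ = Set.range (fun i => |x (σ' i)|) := rfl
  have heq : (fun i => |x (σ i)|) = (fun i => |x (σ' i)|) :=
    (StrictAnti.range_inj hanti hanti').1 hrange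
  have hσ : σ = σ' := Equiv.ext fun i => hxinj (congrFun heq i)
  refine ⟨hσ, funext fun i => ?_⟩
  rw [hε i, hε' i, hσ]

lemma volume_eq_card_smul (A : Set (Fin n → ℝ)) (hA : MeasurableSet A) (hQ : A ⊆ Qp n)
    (hinv : ∀ (σ : Equiv.Perm (Fin n)) (ε : Fin n → Bool), oT σ ε ⁻¹' A = A) :
    volume A = (Fintype.card (Equiv.Perm (Fin n) × (Fin n → Bool))) • volume (A ∩ oS n) := by
  classical
  set P : Equiv.Perm (Fin n) × (Fin n → Bool) → Set (Fin n → ℝ) :=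
    fun p => A ∩ (oT p.1 p.2 ⁻¹' oS n) with hP
  have hPm : ∀ p, MeasurableSet (P p) :=
    fun p => hA.inter ((oT_measurePreserving p.1 p.2).measurable measurableSet_oS)
  have hdisj : Pairwise (Function.onFun (AEDisjoint volume) P) := by
    intro p q hpq
    refine measure_mono_null (fun x hx => ?_) volume_Np
    by_contra hxN
    obtain ⟨⟨_, h1⟩, _, h2⟩ := hx
    obtain ⟨hσ, hε⟩ := piece_unique hxN h1 h2
    exact hpq (Prod.ext hσ hε)
  have hcover : A ⊆ (⋃ p, P p) ∪ Np n := by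
    intro x hxA
    by_cases hxN : x ∈ Np n
    · exact Or.inr hxN
    · obtain ⟨σ, ε, hσε⟩ := exists_piece (hQ hxA)
      exact Or.inl (Set.mem_iUnion.2 ⟨(σ, ε), hxA, hσε⟩)
  have h1 : volume A = volume (⋃ p, P p) := by
    apply le_antisymm
    · calc volume A ≤ volume ((⋃ p, P p) ∪ Np n) := measure_mono hcover
        _ ≤ volume (⋃ p, P p) + volume (Np n) := measure_union_le _ _
        _ = volume (⋃ p, P p) := by rw [volume_Np, add_zero]
    · exact measure_mono (Set.iUnion_subset fun p => Set.inter_subset_left)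
  rw [h1, measure_iUnion₀ hdisj (fun p => (hPm p).nullMeasurableSet), tsum_fintype]
  have h2 : ∀ p : Equiv.Perm (Fin n) × (Fin n → Bool), volume (P p) = volume (A ∩ oS n) := by
    intro p
    have hPp : P p = oT p.1 p.2 ⁻¹' (A ∩ oS n) := by
      rw [Set.preimage_inter, hinv p.1 p.2]
    rw [hPp]
    exact (oT_measurePreserving p.1 p.2).measure_preimage
      (hA.inter measurableSet_oS).nullMeasurableSet
  rw [Finset.sum_congr rfl fun p _ => h2 p, Finset.sum_const, Finset.card_univ]

lemma oS_subset_Qp : oS n ⊆ Qp n := by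
  intro x hx i
  exact abs_le.2 ⟨by linarith [(hx.2 i).1], (hx.2 i).2⟩

lemma Bp_subset_Qp : Bp n ⊆ Qp n := by
  intro x hx i
  rw [← sq_le_one_iff_abs_le_one]
  calc x i ^ 2 ≤ ∑ j, x j ^ 2 :=
        Finset.single_le_sum (fun j _ => sq_nonneg (x j)) (Finset.mem_univ i)
    _ ≤ 1 := hx

lemma volume_Qp : volume (Qp n) = 2 ^ n := by
  have : Qp n = Set.pi Set.univ (fun _ : Fin n => Icc (-1:ℝ) 1) := by
    ext x
    constructor
    · intro h i _
      exact Set.mem_Icc.2 (abs_le.1 (h i))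
    · intro h i
      exact abs_le.2 (Set.mem_Icc.1 (h i (Set.mem_univ i)))
  rw [this, volume_pi_pi]
  have : volume (Icc (-1:ℝ) 1) = 2 := by
    rw [Real.volume_Icc]
    norm_num
  rw [Finset.prod_congr rfl fun i _ => this, Finset.prod_const, Finset.card_univ, Fintype.card_fin]

lemma pi_main :
    volume (Bp n ∩ oS n) / volume (oS n) = volume (Bp n) / 2 ^ n := by
  classical
  set k : ℕ := Fintype.card (Equiv.Perm (Fin n) × (Fin n → Bool)) with hk
  have hk0 : (k : ENNReal) ≠ 0 := by
    have h : 0 < k := Fintype.card_pos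
    exact_mod_cast h.ne'
  have hkt : (k : ENNReal) ≠ ⊤ := ENNReal.natCast_ne_top k
  have hB : volume (Bp n) = (k : ENNReal) * volume (Bp n ∩ oS n) := by
    rw [volume_eq_card_smul (Bp n) measurableSet_Bp Bp_subset_Qp oT_preimage_Bp, nsmul_eq_mul]
  have hQ : (2 : ENNReal) ^ n = (k : ENNReal) * volume (oS n) := by
    have := volume_eq_card_smul (Qp n) measurableSet_Qp (fun x h => h) oT_preimage_Qp
    rw [Set.inter_eq_self_of_subset_right oS_subset_Qp, volume_Qp, nsmul_eq_mul] at this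
    exact this
  rw [hB, hQ, ENNReal.mul_div_mul_left _ _ hk0 hkt]

lemma hull_eq (n : ℕ) (c : Fin (n + 1) → EuclideanSpace ℝ (Fin n))
    (hc : ∀ k : Fin (n + 1), ∀ i : Fin n,
      c k i = if (i : ℕ) < (k : ℕ) then 1 else 0) :
    convexHull ℝ (Set.range c) =
      {x : EuclideanSpace ℝ (Fin n) |
        (∀ i j : Fin n, i ≤ j → x j ≤ x i) ∧ ∀ i, x i ∈ Icc (0:ℝ) 1} := by
  classical
  apply Set.Subset.antisymm
  · apply convexHull_min
    · rintro _ ⟨k, rfl⟩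
      constructor
      · intro i j hij
        rw [hc, hc]
        by_cases hj : (j:ℕ) < (k:ℕ)
        · have hi : (i:ℕ) < (k:ℕ) := lt_of_le_of_lt (by exact_mod_cast hij) hj
          simp [hi, hj]
        · by_cases hi : (i:ℕ) < (k:ℕ) <;> simp [hi, hj]
      · intro i
        rw [hc]
        by_cases hi : (i:ℕ) < (k:ℕ) <;> simp [hi]
    · intro x hx y hy a b ha hb hab
      have hab' : ∀ i : Fin n, (a • x + b • y) i = a * x i + b * y i := by
        intro i
        simp [PiLp.add_apply, PiLp.smul_apply, smul_eq_mul]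
      constructor
      · intro i j hij
        rw [hab' i, hab' j]
        exact add_le_add (mul_le_mul_of_nonneg_left (hx.1 i j hij) ha)
          (mul_le_mul_of_nonneg_left (hy.1 i j hij) hb)
      · intro i
        rw [hab' i]
        constructor
        · exact add_nonneg (mul_nonneg ha (hx.2 i).1) (mul_nonneg hb (hy.2 i).1)
        · calc a * x i + b * y i ≤ a * 1 + b * 1 :=
              add_le_add (mul_le_mul_of_nonneg_left (hx.2 i).2 ha)
                (mul_le_mul_of_nonneg_left (hy.2 i).2 hb)
            _ = 1 := by rw [mul_one, mul_one, hab]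
  · intro x hx
    set F : ℕ → ℝ := fun m => match m with
      | 0 => 1
      | j+1 => if h : j < n then x ⟨j, h⟩ else 0 with hF
    have hFn1 : F (n+1) = 0 := by simp [hF]
    have hFanti : ∀ m, m ≤ n → F (m+1) ≤ F m := by
      intro m hm
      match m with
      | 0 =>
        show (if h : 0 < n then x ⟨0, h⟩ else 0) ≤ 1
        by_cases h : 0 < n
        · simp only [h, dif_pos]
          exact (hx.2 _).2
        · simp [h]
      | j+1 =>
        have hj : j < n := hm
        show (if h : j+1 < n then x ⟨j+1, h⟩ else 0) ≤ if h : j < n then x ⟨j, h⟩ else 0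
        rw [dif_pos hj]
        by_cases h : j + 1 < n
        · rw [dif_pos h]
          exact hx.1 ⟨j, hj⟩ ⟨j+1, h⟩ (by simp [Fin.le_def])
        · rw [dif_neg h]
          exact (hx.2 _).1
    set w : Fin (n+1) → ℝ := fun k => F k - F (k+1) with hw
    have hw0 : ∀ k, 0 ≤ w k := fun k => sub_nonneg.2 (hFanti k (Nat.lt_succ_iff.1 k.isLt))
    have hsum : ∑ k, w k = 1 := by
      have : ∑ k : Fin (n+1), w k = ∑ m ∈ Finset.range (n+1), (F m - F (m+1)) :=
        Fin.sum_univ_eq_sum_range (fun m => F m - F (m+1)) (n+1)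
      rw [this, Finset.sum_range_sub' F, hFn1, sub_zero]
    have htele : ∀ a b : ℕ, a ≤ b →
        ∑ m ∈ Finset.Ico a b, (F m - F (m+1)) = F a - F b := by
      intro a b hab
      rw [Finset.sum_Ico_eq_sum_range]
      have : ∀ j, F (a + j) - F (a + j + 1) = F (a + j) - F (a + (j+1)) := by
        intro j
        have h : a + j + 1 = a + (j + 1) := by omega
        rw [h]
      rw [Finset.sum_congr rfl fun j _ => this j, Finset.sum_range_sub' (fun j => F (a + j))]
      congr 2
      omega
    have hcoord : ∀ i : Fin n, ∑ k : Fin (n+1), w k * c k i = x i := by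
      intro i
      have h1 : ∀ k : Fin (n+1), w k * c k i
          = if (i:ℕ) < (k:ℕ) then F k - F ((k:ℕ)+1) else 0 := by
        intro k
        rw [hc]
        by_cases h : (i:ℕ) < (k:ℕ) <;> simp [h, hw]
      rw [Finset.sum_congr rfl fun k _ => h1 k]
      have h2 : ∑ k : Fin (n+1), (if (i:ℕ) < (k:ℕ) then F k - F ((k:ℕ)+1) else 0)
          = ∑ m ∈ Finset.range (n+1), (if (i:ℕ) < m then F m - F (m+1) else 0) :=
        Fin.sum_univ_eq_sum_range (fun m => if (i:ℕ) < m then F m - F (m+1) else 0) (n+1)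
      rw [h2, Finset.range_eq_Ico,
        ← Finset.sum_Ico_consecutive _ (Nat.zero_le ((i:ℕ)+1)) (by omega : (i:ℕ)+1 ≤ n+1)]
      have h3 : ∑ m ∈ Finset.Ico 0 ((i:ℕ)+1), (if (i:ℕ) < m then F m - F (m+1) else 0) = 0 := by
        apply Finset.sum_eq_zero
        intro m hm
        rw [Finset.mem_Ico] at hm
        rw [if_neg (by omega)]
      have h4 : ∑ m ∈ Finset.Ico ((i:ℕ)+1) (n+1), (if (i:ℕ) < m then F m - F (m+1) else 0)
          = ∑ m ∈ Finset.Ico ((i:ℕ)+1) (n+1), (F m - F (m+1)) := by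
        apply Finset.sum_congr rfl
        intro m hm
        rw [Finset.mem_Ico] at hm
        rw [if_pos (by omega)]
      rw [h3, h4, htele _ _ (by omega), hFn1, sub_zero, zero_add]
      show (if h : (i:ℕ) < n then x ⟨(i:ℕ), h⟩ else 0) = x i
      rw [dif_pos i.isLt]
    have hxeq : x = ∑ k : Fin (n+1), w k • c k := by
      set L := WithLp.linearEquiv 2 ℝ (Fin n → ℝ) with hL
      apply L.injective
      rw [map_sum]
      funext i
      rw [Finset.sum_apply]
      show x i = ∑ k : Fin (n+1), (L (w k • c k)) i
      rw [← hcoord i]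
      apply Finset.sum_congr rfl
      intro k _
      rw [_root_.map_smul]
      show w k * c k i = (w k • (L (c k))) i
      rw [Pi.smul_apply, smul_eq_mul]
      rfl
    rw [hxeq, ← Finset.centerMass_eq_of_sum_1 Finset.univ c hsum]
    exact Finset.centerMass_mem_convexHull Finset.univ (fun k _ => hw0 k)
      (by rw [hsum]; norm_num) (fun k _ => Set.mem_range_self k)

end Orthoscheme

theorem standard_orthoscheme_ball_fraction (n : ℕ)
    (c : Fin (n + 1) → EuclideanSpace ℝ (Fin n))
    (hc : ∀ k : Fin (n + 1), ∀ i : Fin n,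
      c k i = if (i : ℕ) < (k : ℕ) then 1 else 0) :
    volume (convexHull ℝ (Set.range c) ∩ Metric.closedBall 0 1) /
        volume (convexHull ℝ (Set.range c)) =
      volume (Metric.closedBall (0 : EuclideanSpace ℝ (Fin n)) 1) / 2 ^ n := by
  classical
  set e := (MeasurableEquiv.toLp 2 (Fin n → ℝ)).symm with he
  have hS : convexHull ℝ (Set.range c) = e ⁻¹' (Orthoscheme.oS n) := by
    rw [Orthoscheme.hull_eq n c hc]
    ext x
    simp only [Set.mem_preimage, he, MeasurableEquiv.coe_toLp_symm]
    constructor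
    · intro h
      exact ⟨fun i j hij => by simpa [WithLp.equiv_apply] using h.1 i j hij,
        fun i => by simpa [WithLp.equiv_apply] using h.2 i⟩
    · intro h
      exact ⟨fun i j hij => by simpa [WithLp.equiv_apply] using h.1 i j hij,
        fun i => by simpa [WithLp.equiv_apply] using h.2 i⟩
  have hB : Metric.closedBall (0 : EuclideanSpace ℝ (Fin n)) 1 = e ⁻¹' (Orthoscheme.Bp n) := by
    ext x
    simp only [Metric.mem_closedBall, Set.mem_preimage, dist_zero_right]
    rw [EuclideanSpace.norm_eq]
    have hnorm : ∑ i, ‖x i‖ ^ 2 = ∑ i, x i ^ 2 := by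
      apply Finset.sum_congr rfl
      intro i _
      rw [Real.norm_eq_abs, sq_abs]
    rw [hnorm]
    have hmem : (e x ∈ Orthoscheme.Bp n) ↔ ∑ i, x i ^ 2 ≤ 1 := by
      show (∑ i, (e x) i ^ 2 ≤ 1) ↔ _
      have : ∀ i, (e x) i = x i := fun i => by
        simp [he, MeasurableEquiv.coe_toLp_symm, WithLp.equiv_apply]
      rw [Finset.sum_congr rfl fun i _ => by rw [this i]]
    rw [hmem]
    have hnn : 0 ≤ ∑ i, x i ^ 2 := Finset.sum_nonneg fun i _ => sq_nonneg _
    constructor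
    · intro h
      have h2 := Real.sq_sqrt hnn
      nlinarith [Real.sqrt_nonneg (∑ i, x i ^ 2)]
    · intro h
      have := Real.sqrt_le_sqrt h
      simpa using this
  rw [hS, hB, ← Set.preimage_inter]
  have hmp := EuclideanSpace.volume_preserving_symm_measurableEquiv_toLp (Fin n)
  rw [hmp.measure_preimage (Orthoscheme.measurableSet_oS.inter Orthoscheme.measurableSet_Bp).nullMeasurableSet,
    hmp.measure_preimage Orthoscheme.measurableSet_oS.nullMeasurableSet,
    hmp.measure_preimage Orthoscheme.measurableSet_Bp.nullMeasurableSet,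
    Set.inter_comm]
  exact Orthoscheme.pi_main
end

section
/- Let L ⊆ R^N be an n-dimensional linear subspace and let P = [-1,1]^N ∩ L, a polytope in L containing 0 in its relative interior. Then for every face F of P of codimension k (within L), the distance from 0 to the affine span of F is at least √k. -/
open Module

lemma finrank_le_inf_iInf_ker {K V ι : Type*} [Field K] [AddCommGroup V] [Module K V]
    [FiniteDimensional K V] (U : Submodule K V) (s : Finset ι) (φ : ι → (V →ₗ[K] K)) :
    finrank K U ≤
      finrank K (U ⊓ ⨅ i ∈ s, LinearMap.ker (φ i) : Submodule K V) + s.card := by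
  classical
  induction s using Finset.induction_on with
  | empty =>
      have h0 : (⨅ i ∈ (∅ : Finset ι), LinearMap.ker (φ i)) = ⊤ := by
        simp
      rw [h0, inf_top_eq]
      simp
  | @insert a s ha ih =>
      have hins : (⨅ i ∈ insert a s, LinearMap.ker (φ i)) =
          LinearMap.ker (φ a) ⊓ ⨅ i ∈ s, LinearMap.ker (φ i) := by
        exact Finset.iInf_insert a s _
      set U' : Submodule K V := U ⊓ ⨅ i ∈ s, LinearMap.ker (φ i) with hU'
      have hrw : (U ⊓ ⨅ i ∈ insert a s, LinearMap.ker (φ i)) =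
          U' ⊓ LinearMap.ker (φ a) := by
        rw [hins, hU']
        rw [inf_comm (LinearMap.ker (φ a)), ← inf_assoc]
      have key : finrank K U' ≤ finrank K (U' ⊓ LinearMap.ker (φ a) : Submodule K V) + 1 := by
        have h1 := LinearMap.finrank_range_add_finrank_ker ((φ a).domRestrict U')
        have h2 : finrank K (LinearMap.range ((φ a).domRestrict U')) ≤ 1 := by
          simpa using (LinearMap.range ((φ a).domRestrict U')).finrank_le
        have h3 : finrank K (LinearMap.ker ((φ a).domRestrict U'))
            = finrank K (U' ⊓ LinearMap.ker (φ a) : Submodule K V) := by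
          rw [LinearMap.ker_domRestrict]
          rw [← Submodule.finrank_map_subtype_eq U']
          rw [Submodule.map_comap_subtype]
        omega
      rw [hrw, Finset.card_insert_of_notMem ha]
      omega

set_option maxHeartbeats 1000000 in
theorem cube_section_face_distance (N n : ℕ)
    (L : Submodule ℝ (EuclideanSpace ℝ (Fin N)))
    (hL : Module.finrank ℝ L = n)
    (P : Set (EuclideanSpace ℝ (Fin N)))
    (hP : P = {x : EuclideanSpace ℝ (Fin N) | ∀ i, |x i| ≤ 1} ∩
      (L : Set (EuclideanSpace ℝ (Fin N))))
    (F : Set (EuclideanSpace ℝ (Fin N))) (hF : IsExposed ℝ P F) (hFne : F.Nonempty) :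
    Real.sqrt (n - Module.finrank ℝ (affineSpan ℝ F).direction) ≤
      Metric.infDist 0 (affineSpan ℝ F : Set (EuclideanSpace ℝ (Fin N))) := by
  classical
  set A := affineSpan ℝ F with hA
  set d := Module.finrank ℝ A.direction with hd
  by_cases hnd : n ≤ d
  · have : ((n : ℝ) - d) ≤ 0 := by
      have : (n : ℝ) ≤ d := by exact_mod_cast hnd
      linarith
    rw [Real.sqrt_eq_zero_of_nonpos this]
    exact Metric.infDist_nonneg
  push_neg at hnd
  -- basic facts
  have hFP : F ⊆ P := hF.subset
  have hPcube : ∀ x ∈ P, ∀ i, |x i| ≤ 1 := by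
    intro x hx i; rw [hP] at hx; exact hx.1 i
  have hPL : ∀ x ∈ P, x ∈ L := by intro x hx; rw [hP] at hx; exact hx.2
  have hPconv : Convex ℝ P := by
    rw [hP]
    apply Convex.inter _ L.convex
    intro x hx y hy a b ha hb hab i
    have hxy : (a • x + b • y) i = a * x i + b * y i := rfl
    rw [Set.mem_setOf_eq] at hx hy
    calc |(a • x + b • y) i| = |a * x i + b * y i| := by rw [hxy]
      _ ≤ |a * x i| + |b * y i| := abs_add_le _ _
      _ = a * |x i| + b * |y i| := by
          rw [abs_mul, abs_mul, abs_of_nonneg ha, abs_of_nonneg hb]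
      _ ≤ a * 1 + b * 1 := by
          gcongr
          · exact hx i
          · exact hy i
      _ = 1 := by linarith
  have hFconv : Convex ℝ F := hF.convex hPconv
  obtain ⟨f, hfF⟩ := hF hFne
  -- the set of coordinates fixed at ±1 on F
  set S : Finset (Fin N) :=
    Finset.univ.filter (fun i => (∀ x ∈ F, x i = 1) ∨ (∀ x ∈ F, x i = -1)) with hS
  -- pointwise: for each non-fixed coordinate there is a point with |·| < 1
  have hpt : ∀ i ∉ S, ∃ w ∈ F, |w i| < 1 := by
    intro i hi
    rw [hS, Finset.mem_filter] at hi
    push_neg at hi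
    obtain ⟨hx1, hy1⟩ := hi (Finset.mem_univ i)
    obtain ⟨x, hxF, hx⟩ := hx1
    obtain ⟨y, hyF, hy⟩ := hy1
    refine ⟨(1/2 : ℝ) • x + (1/2 : ℝ) • y,
      hFconv hxF hyF (by norm_num) (by norm_num) (by norm_num), ?_⟩
    have hco : ((1/2 : ℝ) • x + (1/2 : ℝ) • y) i = (1/2) * x i + (1/2) * y i := rfl
    rw [hco]
    have hax := hPcube x (hFP hxF) i
    have hay := hPcube y (hFP hyF) i
    rw [abs_le] at hax hay
    have hxlt : x i < 1 := lt_of_le_of_ne hax.2 hx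
    have hygt : -1 < y i := lt_of_le_of_ne' hay.1 hy
    rw [abs_lt]
    constructor <;> nlinarith [hax.1, hay.2]
  -- a point of F with all non-fixed coordinates strictly inside
  have hzex : ∀ T : Finset (Fin N), (∀ i ∈ T, i ∉ S) → ∃ z ∈ F, ∀ i ∈ T, |z i| < 1 := by
    intro T
    induction T using Finset.induction_on with
    | empty => intro _; obtain ⟨z, hz⟩ := hFne; exact ⟨z, hz, by simp⟩
    | @insert a T ha ih =>
        intro hT
        obtain ⟨z, hzF, hz⟩ := ih (fun i hi => hT i (Finset.mem_insert_of_mem hi))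
        obtain ⟨w, hwF, hw⟩ := hpt a (hT a (Finset.mem_insert_self a T))
        refine ⟨(1/2 : ℝ) • z + (1/2 : ℝ) • w,
          hFconv hzF hwF (by norm_num) (by norm_num) (by norm_num), ?_⟩
        intro i hi
        have hco : ((1/2 : ℝ) • z + (1/2 : ℝ) • w) i = (1/2) * z i + (1/2) * w i := rfl
        rw [hco]
        have haz := hPcube z (hFP hzF) i
        have haw := hPcube w (hFP hwF) i
        rcases Finset.mem_insert.1 hi with rfl | hi
        · calc |(1/2 : ℝ) * z i + (1/2) * w i| ≤ |(1/2 : ℝ) * z i| + |(1/2) * w i| := abs_add_le _ _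
            _ = (1/2) * |z i| + (1/2) * |w i| := by
                rw [abs_mul, abs_mul,
                  show |(1/2 : ℝ)| = 1/2 from abs_of_pos (by norm_num)]
            _ < 1 := by nlinarith [hw]
        · calc |(1/2 : ℝ) * z i + (1/2) * w i| ≤ |(1/2 : ℝ) * z i| + |(1/2) * w i| := abs_add_le _ _
            _ = (1/2) * |z i| + (1/2) * |w i| := by
                rw [abs_mul, abs_mul,
                  show |(1/2 : ℝ)| = 1/2 from abs_of_pos (by norm_num)]
            _ < 1 := by nlinarith [hz i hi]
  obtain ⟨z, hzF, hz⟩ := hzex Sᶜ (fun i hi => Finset.mem_compl.1 hi)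
  have hz' : ∀ i ∉ S, |z i| < 1 := fun i hi => hz i (Finset.mem_compl.2 hi)
  have hzP : z ∈ P := hFP hzF
  have hzmax : ∀ y ∈ P, f y ≤ f z := by
    have h := hzF
    rw [hfF] at h
    exact h.2
  have hzA : z ∈ A := subset_affineSpan ℝ F hzF
  -- coordinates in S are fixed on the affine span
  have hSfix : ∀ i ∈ S, ∀ x ∈ A, |x i| = 1 := by
    intro i hi
    rw [hS, Finset.mem_filter] at hi
    rcases hi.2 with h | h
    · intro x hx
      have : x i = 1 := by
        refine affineSpan_induction (p := fun y => y i = 1) hx h ?_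
        intro c u v w hu hv hw
        have hco : (c • (u -ᵥ v) +ᵥ w) i = c * (u i - v i) + w i := rfl
        rw [hco, hu, hv, hw]; ring
      rw [this]; norm_num
    · intro x hx
      have : x i = -1 := by
        refine affineSpan_induction (p := fun y => y i = -1) hx h ?_
        intro c u v w hu hv hw
        have hco : (c • (u -ᵥ v) +ᵥ w) i = c * (u i - v i) + w i := rfl
        rw [hco, hu, hv, hw]; ring
      rw [this]; norm_num
  -- norm lower bound on the affine span
  have hnorm : ∀ x ∈ A, Real.sqrt (S.card) ≤ ‖x‖ := by
    intro x hx
    rw [EuclideanSpace.norm_eq]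
    apply Real.sqrt_le_sqrt
    calc (S.card : ℝ) = ∑ i ∈ S, (1 : ℝ) := by simp
      _ = ∑ i ∈ S, ‖x i‖ ^ 2 := by
          refine Finset.sum_congr rfl fun i hi => ?_
          rw [Real.norm_eq_abs, hSfix i hi x hx]; norm_num
      _ ≤ ∑ i, ‖x i‖ ^ 2 := by
          apply Finset.sum_le_sum_of_subset_of_nonneg (Finset.subset_univ S)
          intro i _ _; positivity
  -- the subspace W
  set W : Submodule ℝ (EuclideanSpace ℝ (Fin N)) :=
    L ⊓ ⨅ i ∈ S, LinearMap.ker ((EuclideanSpace.proj i : EuclideanSpace ℝ (Fin N) →L[ℝ] ℝ) : EuclideanSpace ℝ (Fin N) →ₗ[ℝ] ℝ) with hW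
  have hmemW : ∀ v : EuclideanSpace ℝ (Fin N), v ∈ W ↔ v ∈ L ∧ ∀ i ∈ S, v i = 0 := by
    intro v
    rw [hW]
    simp only [Submodule.mem_inf, Submodule.mem_iInf, LinearMap.mem_ker,
      ContinuousLinearMap.coe_coe]
    exact and_congr Iff.rfl (by
      constructor
      · intro h i hi
        exact h i hi
      · intro h i hi
        exact h i hi)
  -- positivity of N
  have hn1 : 1 ≤ n := by omega
  have hN : 0 < N := by
    have hle : Module.finrank ℝ L ≤ N := by
      simpa [finrank_euclideanSpace] using Submodule.finrank_le L
    omega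
  have : Nonempty (Fin N) := ⟨⟨0, hN⟩⟩
  -- W is contained in the direction of A
  have hWD : W ≤ A.direction := by
    intro w hw
    rw [hmemW] at hw
    obtain ⟨hwL, hwS⟩ := hw
    set g : Fin N → ℝ := fun i => if i ∈ S then 1 else (1 - |z i|) / (|w i| + 1) with hg
    set t : ℝ := Finset.univ.inf' Finset.univ_nonempty g with htdef
    have ht0 : 0 < t := by
      rw [htdef, Finset.lt_inf'_iff]
      intro i _
      rw [hg]
      by_cases hiS : i ∈ S
      · simp [hiS]
      · simp only [hiS, if_false]
        apply div_pos
        · linarith [hz' i hiS]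
        · positivity
    have htle : ∀ i, t ≤ g i := fun i => Finset.inf'_le g (Finset.mem_univ i)
    have hmem : ∀ v : EuclideanSpace ℝ (Fin N), v ∈ L → (∀ i ∈ S, v i = 0) → (∀ i, |v i| = |w i|) →
        z + t • v ∈ P := by
      intro v hvL hvS hvabs
      rw [hP]
      refine ⟨fun i => ?_, L.add_mem (hPL z hzP) (L.smul_mem _ hvL)⟩
      · show |z i + t * v i| ≤ 1
        by_cases hiS : i ∈ S
        · rw [hvS i hiS]
          simpa using hPcube z hzP i
        · have h1 : |z i| < 1 := hz' i hiS
          have h2 : t ≤ (1 - |z i|) / (|w i| + 1) := by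
            have h := htle i
            simp only [hg] at h
            rwa [if_neg hiS] at h
          have hb0 : (0 : ℝ) ≤ |w i| := abs_nonneg _
          have h3 : t * (|w i| + 1) ≤ 1 - |z i| :=
            (le_div_iff₀ (by positivity)).1 h2
          calc |z i + t * v i| ≤ |z i| + |t * v i| := abs_add_le _ _
            _ = |z i| + t * |v i| := by rw [abs_mul, abs_of_pos ht0]
            _ = |z i| + t * |w i| := by rw [hvabs i]
            _ ≤ 1 := by nlinarith
    have hplus : z + t • w ∈ P := hmem w hwL hwS (fun i => rfl)
    have hminus : z + t • (-w) ∈ P := by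
      refine hmem (-w) (L.neg_mem hwL) (fun i hi => by
        have hco : (-w) i = -(w i) := rfl
        rw [hco, hwS i hi, neg_zero]) (fun i => ?_)
      have hco : (-w) i = -(w i) := rfl
      rw [hco, abs_neg]
    have hfw : f w = 0 := by
      have h1 : f (z + t • w) ≤ f z := hzmax _ hplus
      have h2 : f (z + t • (-w)) ≤ f z := hzmax _ hminus
      rw [map_add, map_smul, smul_eq_mul] at h1
      rw [map_add, map_smul, map_neg, smul_eq_mul] at h2
      have h3 : t * f w = 0 := by linarith
      rcases mul_eq_zero.1 h3 with h | h
      · exact absurd h ht0.ne'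
      · exact h
    have hFmem : z + t • w ∈ F := by
      rw [hfF]
      refine ⟨hplus, fun y hy => ?_⟩
      rw [map_add, map_smul, hfw]
      simpa using hzmax y hy
    have h1 : z + t • w ∈ A := subset_affineSpan ℝ F hFmem
    have h2 : t • w ∈ A.direction := by
      have hv := AffineSubspace.vsub_mem_direction h1 hzA
      rwa [vsub_eq_sub, add_sub_cancel_left] at hv
    have hsmul : t⁻¹ • (t • w) = w := by
      rw [smul_smul, inv_mul_cancel₀ ht0.ne', one_smul]
    rw [← hsmul]
    exact A.direction.smul_mem _ h2
  -- dimension count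
  have hdim : n ≤ d + S.card := by
    have h1 : Module.finrank ℝ L ≤ Module.finrank ℝ W + S.card :=
      finrank_le_inf_iInf_ker L S _
    have h2 : Module.finrank ℝ W ≤ d := Submodule.finrank_mono hWD
    omega
  -- conclude
  have hcard : ((n : ℝ) - d) ≤ S.card := by
    have : (n : ℝ) ≤ d + S.card := by exact_mod_cast hdim
    linarith
  have hfinal : Real.sqrt (S.card) ≤ Metric.infDist 0 (A : Set (EuclideanSpace ℝ (Fin N))) := by
    by_contra hcon
    push_neg at hcon
    obtain ⟨y, hyA, hy⟩ := (Metric.infDist_lt_iff ⟨z, hzA⟩).1 hcon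
    rw [dist_zero_left] at hy
    exact absurd (hnorm y hyA) (not_le.2 hy)
  calc Real.sqrt ((n : ℝ) - d) ≤ Real.sqrt (S.card) := Real.sqrt_le_sqrt hcard
    _ ≤ _ := hfinal
end

section
/- Fix q > 0. For t ∈ (0, π/2), let T(t) = {(x,y) ∈ R² : x ≥ 0, y ≥ 0, x/tan(t) + y/q ≤ 1} and define area(t) = ∫_{T(t)} (1 + x² + y²)^{-3/2} dx dy. Then area(t)/sin(t) is strictly increasing in t on (0, π/2). -/
open MeasureTheory Real Set

lemma rpow_neg_three_halves (A : ℝ) (hA : 0 < A) :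
    A ^ (-(3/2 : ℝ)) = (A * Real.sqrt A)⁻¹ := by
  rw [Real.rpow_neg hA.le]
  congr 1
  have : (3/2 : ℝ) = 1 + 1/2 := by norm_num
  rw [this, Real.rpow_add hA, Real.rpow_one, ← Real.sqrt_eq_rpow]

lemma inner_hasDeriv (x : ℝ) (y : ℝ) :
    HasDerivAt (fun y : ℝ => y / ((1+x^2) * Real.sqrt (1+x^2+y^2)))
      ((1 + x^2 + y^2) ^ (-(3/2 : ℝ))) y := by
  have hA : (0:ℝ) < 1 + x^2 + y^2 := by positivity
  have hx2 : (0:ℝ) < 1 + x^2 := by positivity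
  have hAy : HasDerivAt (fun y : ℝ => 1+x^2+y^2) (2*y) y := by
    simpa using ((hasDerivAt_pow 2 y).const_add (1+x^2))
  have hsy : HasDerivAt (fun y : ℝ => Real.sqrt (1+x^2+y^2)) (2*y / (2 * Real.sqrt (1+x^2+y^2))) y :=
    hAy.sqrt (by positivity)
  have hd : HasDerivAt (fun y : ℝ => (1+x^2) * Real.sqrt (1+x^2+y^2))
      ((1+x^2) * (2*y / (2 * Real.sqrt (1+x^2+y^2)))) y := hsy.const_mul _
  have h := (hasDerivAt_id y).div hd (by positivity)
  refine h.congr_deriv ?_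
  symm
  rw [rpow_neg_three_halves _ hA]
  set s := Real.sqrt (1+x^2+y^2) with hsdef
  have hs : 0 < s := Real.sqrt_pos.2 hA
  have hs2 : s^2 = 1+x^2+y^2 := Real.sq_sqrt hA.le
  field_simp
  simp only [id]
  ring_nf
  linear_combination (-y^2) * hs2

lemma kcont : Continuous (fun p : ℝ × ℝ => (1 + p.1 ^ 2 + p.2 ^ 2) ^ (-(3 / 2 : ℝ))) := by
  apply Continuous.rpow_const
  · continuity
  · intro p; left; positivity

set_option maxHeartbeats 1000000 in
lemma area_eq_iterated (q T : ℝ) (hq : 0 < q) (hT : 0 < T) :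
    (∫ p in {p : ℝ × ℝ | 0 ≤ p.1 ∧ 0 ≤ p.2 ∧ p.1 / T + p.2 / q ≤ 1},
        (1 + p.1 ^ 2 + p.2 ^ 2) ^ (-(3 / 2 : ℝ)))
    = ∫ x in (0:ℝ)..T,
        (q*(1-x/T)) / ((1+x^2) * Real.sqrt (1+x^2+(q*(1-x/T))^2)) := by
  set k : ℝ × ℝ → ℝ := fun p => (1 + p.1 ^ 2 + p.2 ^ 2) ^ (-(3 / 2 : ℝ)) with hk
  set S : Set (ℝ × ℝ) := {p | 0 ≤ p.1 ∧ 0 ≤ p.2 ∧ p.1 / T + p.2 / q ≤ 1} with hSdef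
  have hSclosed : IsClosed S := by
    have h1 : IsClosed {p : ℝ × ℝ | 0 ≤ p.1} := isClosed_le continuous_const continuous_fst
    have h2 : IsClosed {p : ℝ × ℝ | 0 ≤ p.2} := isClosed_le continuous_const continuous_snd
    have h3 : IsClosed {p : ℝ × ℝ | p.1 / T + p.2 / q ≤ 1} :=
      isClosed_le (by fun_prop) continuous_const
    have : S = {p : ℝ × ℝ | 0 ≤ p.1} ∩ ({p : ℝ × ℝ | 0 ≤ p.2} ∩ {p : ℝ × ℝ | p.1 / T + p.2 / q ≤ 1}) := by
      ext p; simp [hSdef, and_assoc]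
    rw [this]; exact h1.inter (h2.inter h3)
  have hSsub : S ⊆ Icc (0,0) (T,q) := by
    rintro ⟨x, y⟩ ⟨h1, h2, h3⟩
    have hxq : 0 ≤ y / q := div_nonneg h2 hq.le
    have hyT : 0 ≤ x / T := div_nonneg h1 hT.le
    have hx : x ≤ T := by
      have : x / T ≤ 1 := by linarith
      calc x = (x / T) * T := by field_simp
      _ ≤ 1 * T := by nlinarith
      _ = T := one_mul T
    have hy : y ≤ q := by
      have : y / q ≤ 1 := by linarith
      calc y = (y / q) * q := by field_simp
      _ ≤ 1 * q := by nlinarith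
      _ = q := one_mul q
    exact ⟨⟨h1, h2⟩, ⟨hx, hy⟩⟩
  have hScompact : IsCompact S := (isCompact_Icc).of_isClosed_subset hSclosed hSsub
  have hSmeas : MeasurableSet S := hSclosed.measurableSet
  have hInt : IntegrableOn k S := kcont.continuousOn.integrableOn_compact hScompact
  have hInd : Integrable (S.indicator k) := hInt.integrable_indicator hSmeas
  rw [← MeasureTheory.integral_indicator hSmeas]
  rw [MeasureTheory.Measure.volume_eq_prod] at hInd ⊢
  rw [MeasureTheory.integral_prod _ hInd]
  -- slice computation
  have hmemS : ∀ x y : ℝ, ((x, y) ∈ S) ↔ (0 ≤ x ∧ 0 ≤ y ∧ x * q + y * T ≤ T * q) := by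
    intro x y
    simp only [hSdef, Set.mem_setOf_eq]
    constructor
    · rintro ⟨h1, h2, h3⟩
      refine ⟨h1, h2, ?_⟩
      rw [div_add_div _ _ (ne_of_gt hT) (ne_of_gt hq), div_le_one (by positivity)] at h3
      linarith
    · rintro ⟨h1, h2, h3⟩
      refine ⟨h1, h2, ?_⟩
      rw [div_add_div _ _ (ne_of_gt hT) (ne_of_gt hq), div_le_one (by positivity)]
      linarith
  have key : ∀ x : ℝ, (∫ y, S.indicator k (x, y)) =
      (Icc (0:ℝ) T).indicator (fun x => ∫ y in Icc (0:ℝ) (q*(1-x/T)), k (x, y)) x := by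
    intro x
    by_cases hx : x ∈ Icc (0:ℝ) T
    · rw [Set.indicator_of_mem hx]
      have hfun : (fun y => S.indicator k (x, y))
          = (Icc (0:ℝ) (q*(1-x/T))).indicator (fun y => k (x, y)) := by
        funext y
        by_cases hy : y ∈ Icc (0:ℝ) (q*(1-x/T))
        · rw [Set.indicator_of_mem hy, Set.indicator_of_mem]
          rw [hmemS]
          refine ⟨hx.1, hy.1, ?_⟩
          have h2 := hy.2
          have : y * T ≤ q * (1 - x/T) * T := by nlinarith
          have hxT : x / T * T = x := by field_simp
          nlinarith [hxT]
        · rw [Set.indicator_of_notMem hy, Set.indicator_of_notMem]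
          rw [hmemS]
          rintro ⟨h1, h2, h3⟩
          apply hy
          refine ⟨h2, ?_⟩
          have hxT : x / T * T = x := by field_simp
          nlinarith [hxT]
      rw [hfun, MeasureTheory.integral_indicator measurableSet_Icc]
    · rw [Set.indicator_of_notMem hx]
      have hfun : (fun y => S.indicator k (x, y)) = fun _ => (0:ℝ) := by
        funext y
        apply Set.indicator_of_notMem
        rw [hmemS]
        rintro ⟨h1, h2, h3⟩
        apply hx
        refine ⟨h1, ?_⟩
        nlinarith
      rw [hfun, MeasureTheory.integral_zero]
  rw [show (fun x => ∫ y, S.indicator k (x, y))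
      = (Icc (0:ℝ) T).indicator (fun x => ∫ y in Icc (0:ℝ) (q*(1-x/T)), k (x, y)) from funext key]
  rw [MeasureTheory.integral_indicator measurableSet_Icc]
  rw [MeasureTheory.integral_Icc_eq_integral_Ioc, ← intervalIntegral.integral_of_le hT.le]
  apply intervalIntegral.integral_congr
  intro x hx
  rw [Set.uIcc_of_le hT.le] at hx
  have hY : 0 ≤ q * (1 - x/T) := by
    have : x / T ≤ 1 := (div_le_one hT).2 hx.2
    nlinarith
  have hkx : Continuous (fun y : ℝ => (1 + x ^ 2 + y ^ 2) ^ (-(3 / 2 : ℝ))) := by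
    apply Continuous.rpow_const
    · fun_prop
    · intro y; left; positivity
  calc (∫ y in Icc (0:ℝ) (q*(1-x/T)), k (x, y))
      = ∫ y in (0:ℝ)..(q*(1-x/T)), (1 + x ^ 2 + y ^ 2) ^ (-(3 / 2 : ℝ)) := by
        rw [MeasureTheory.integral_Icc_eq_integral_Ioc, ← intervalIntegral.integral_of_le hY]
    _ = (q*(1-x/T)) / ((1+x^2) * Real.sqrt (1+x^2+(q*(1-x/T))^2))
        - (0:ℝ) / ((1+x^2) * Real.sqrt (1+x^2+(0:ℝ)^2)) := by
        exact intervalIntegral.integral_eq_sub_of_hasDerivAt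
          (f := fun y : ℝ => y / ((1+x^2) * Real.sqrt (1+x^2+y^2)))
          (fun y _ => inner_hasDeriv x y) (hkx.intervalIntegrable _ _)
    _ = (q*(1-x/T)) / ((1+x^2) * Real.sqrt (1+x^2+(q*(1-x/T))^2)) := by
        rw [zero_div, sub_zero]

lemma outer_hasDeriv (a b c x : ℝ) (hc : 0 < c)
    (hlt : (a*x+b)^2 < c^2*(1+x^2)) :
    HasDerivAt (fun x : ℝ => Real.arcsin ((a*x+b)/(c * Real.sqrt (1+x^2))))
      ((a - b*x)/((1+x^2) * Real.sqrt (c^2*(1+x^2) - (a*x+b)^2))) x := by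
  have hu0 : (0:ℝ) < 1 + x^2 := by positivity
  set u := Real.sqrt (1+x^2) with hudef
  have hu : 0 < u := Real.sqrt_pos.2 hu0
  have hu2 : u^2 = 1+x^2 := Real.sq_sqrt hu0.le
  have hv0 : (0:ℝ) < c^2*(1+x^2) - (a*x+b)^2 := by linarith
  set v := Real.sqrt (c^2*(1+x^2) - (a*x+b)^2) with hvdef
  have hv : 0 < v := Real.sqrt_pos.2 hv0
  have hv2 : v^2 = c^2*(1+x^2) - (a*x+b)^2 := Real.sq_sqrt hv0.le
  -- derivative of the inside
  have hAx : HasDerivAt (fun x : ℝ => 1+x^2) (2*x) x := by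
    simpa using ((hasDerivAt_pow 2 x).const_add 1)
  have hsx : HasDerivAt (fun x : ℝ => Real.sqrt (1+x^2)) (2*x / (2*u)) x :=
    hAx.sqrt (by positivity)
  have hN : HasDerivAt (fun x : ℝ => a*x+b) a x := by
    simpa using ((hasDerivAt_id x).const_mul a).add_const b
  have hD : HasDerivAt (fun x : ℝ => c * Real.sqrt (1+x^2)) (c * (2*x/(2*u))) x :=
    hsx.const_mul c
  have hg : HasDerivAt (fun x : ℝ => (a*x+b)/(c * Real.sqrt (1+x^2)))
      ((a * (c*u) - (a*x+b) * (c * (2*x/(2*u)))) / (c*u)^2) x :=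
    hN.div hD (by positivity)
  set gx := (a*x+b)/(c*u) with hgx
  have hlt1 : gx^2 < 1 := by
    rw [hgx, div_pow]
    rw [div_lt_one (by positivity)]
    calc (a*x+b)^2 < c^2*(1+x^2) := hlt
    _ = (c*u)^2 := by rw [mul_pow, hu2]
  have habs : |gx| < 1 := by nlinarith [abs_nonneg gx, sq_abs gx]
  have h1 : gx ≠ -1 := by intro h; rw [h] at habs; norm_num at habs
  have h2 : gx ≠ 1 := by intro h; rw [h] at habs; norm_num at habs
  have harc := (Real.hasDerivAt_arcsin h1 h2).comp x hg
  have hsqrt : Real.sqrt (1 - gx^2) = v/(c*u) := by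
    have : 1 - gx^2 = (v/(c*u))^2 := by
      rw [hgx, div_pow, div_pow, hv2, mul_pow, hu2]
      field_simp
    rw [this, Real.sqrt_sq (by positivity)]
  refine harc.congr_deriv ?_
  symm
  rw [hsqrt]
  field_simp
  ring_nf
  linear_combination (-x*(a*x+b)) * hu2

lemma outer_eval (q S C : ℝ) (hq : 0 < q) (hS : 0 < S) (hC : 0 < C) (h1 : S^2+C^2 = 1) :
    (∫ x in (0:ℝ)..(S/C),
        (q*(1-x/(S/C))) / ((1+x^2) * Real.sqrt (1+x^2+(q*(1-x/(S/C)))^2)))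
    = Real.arcsin (q / Real.sqrt (S^2+q^2)) - Real.arcsin (q*C / Real.sqrt (S^2+q^2)) := by
  set T := S/C with hTdef
  have hT : 0 < T := div_pos hS hC
  set D := Real.sqrt (S^2+q^2) with hDdef
  have hD0 : (0:ℝ) < S^2+q^2 := by positivity
  have hD : 0 < D := Real.sqrt_pos.2 hD0
  have hD2 : D^2 = S^2+q^2 := Real.sq_sqrt hD0.le
  set c := D/S with hcdef
  have hc : 0 < c := div_pos hD hS
  have hc2 : c^2 = 1+q^2+q^2/T^2 := by
    rw [hcdef, hTdef, div_pow, div_pow, hD2]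
    field_simp
    linear_combination (-q^2) * h1
  have hid : ∀ x : ℝ, c^2*(1+x^2) - (q*x+q/T)^2 = 1+x^2+(q*(1-x/T))^2 := by
    intro x
    rw [hc2]
    field_simp
    ring
  have hlt : ∀ x : ℝ, (q*x+q/T)^2 < c^2*(1+x^2) := by
    intro x
    have h := hid x
    nlinarith [sq_nonneg x, sq_nonneg (q*(1-x/T))]
  have hF : ∀ x ∈ Set.uIcc (0:ℝ) T,
      HasDerivAt (fun x : ℝ => Real.arcsin ((q*x+q/T)/(c * Real.sqrt (1+x^2))))
        ((q*(1-x/T)) / ((1+x^2) * Real.sqrt (1+x^2+(q*(1-x/T))^2))) x := by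
    intro x _
    have h := outer_hasDeriv q (q/T) c x hc (hlt x)
    rw [hid x] at h
    have hnum : q - q/T*x = q*(1-x/T) := by ring
    rwa [hnum] at h
  have hcont : Continuous (fun x : ℝ =>
      (q*(1-x/T)) / ((1+x^2) * Real.sqrt (1+x^2+(q*(1-x/T))^2))) := by
    apply Continuous.div
    · fun_prop
    · fun_prop
    · intro x; positivity
  rw [intervalIntegral.integral_eq_sub_of_hasDerivAt hF (hcont.intervalIntegrable _ _)]
  have hsq1 : Real.sqrt (1+T^2) = 1/C := by
    rw [show (1:ℝ)+T^2 = (1/C)^2 by rw [hTdef]; field_simp; linarith]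
    exact Real.sqrt_sq (by positivity)
  have hsq0 : Real.sqrt (1+(0:ℝ)^2) = 1 := by norm_num
  have hFT : (q*T+q/T)/(c * Real.sqrt (1+T^2)) = q / D := by
    rw [hsq1, hcdef, hTdef]
    field_simp
    linear_combination h1
  have hF0 : (q*0+q/T)/(c * Real.sqrt (1+(0:ℝ)^2)) = q*C / D := by
    rw [hsq0, hcdef, hTdef]
    field_simp
    ring
  rw [hFT, hF0]
lemma M_A_deriv (q w t : ℝ) (hq : 0 < q) (hw0 : 0 < w) (hw2 : w^2 = 1+q^2)
    (hS : 0 < Real.sin t) (hC : 0 < Real.cos t) :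
    HasDerivAt (fun u : ℝ => Real.arcsin (q / Real.sqrt (Real.sin u^2+q^2))
        - Real.arcsin (q*Real.cos u / Real.sqrt (Real.sin u^2+q^2)))
      (q*(w - Real.cos t)/(Real.sin t^2+q^2)) t := by
  set S := Real.sin t with hSdef
  set C := Real.cos t with hCdef
  have h1 : S^2 + C^2 = 1 := Real.sin_sq_add_cos_sq t
  have hD0 : (0:ℝ) < S^2+q^2 := by positivity
  set D := Real.sqrt (S^2+q^2) with hDdef
  have hD : 0 < D := Real.sqrt_pos.2 hD0
  have hD2 : D^2 = S^2+q^2 := Real.sq_sqrt hD0.le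
  have hqD : q < D := by nlinarith
  have hIn : HasDerivAt (fun u : ℝ => Real.sin u^2 + q^2) (2*S*C) t := by
    have h := ((Real.hasDerivAt_sin t).pow 2).add_const (q^2)
    simpa using h
  have hDD : HasDerivAt (fun u : ℝ => Real.sqrt (Real.sin u^2+q^2)) (2*S*C/(2*D)) t :=
    hIn.sqrt (by positivity)
  have hg1 : HasDerivAt (fun u : ℝ => q / Real.sqrt (Real.sin u^2+q^2))
      ((0*D - q*(2*S*C/(2*D)))/D^2) t := (hasDerivAt_const t q).div hDD (by positivity)
  have hg2 : HasDerivAt (fun u : ℝ => q*Real.cos u / Real.sqrt (Real.sin u^2+q^2))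
      ((q*(-S)*D - q*C*(2*S*C/(2*D)))/D^2) t :=
    ((Real.hasDerivAt_cos t).const_mul q).div hDD (by positivity)
  have hv1 : q / D < 1 := (div_lt_one hD).2 hqD
  have hv1' : (0:ℝ) < q / D := div_pos hq hD
  have hv2 : q*C / D < 1 := by
    rw [div_lt_one hD]
    nlinarith [Real.cos_le_one t]
  have hv2' : (0:ℝ) < q*C/D := div_pos (mul_pos hq hC) hD
  have harc1 := (Real.hasDerivAt_arcsin (by linarith : q/D ≠ -1) (by linarith : q/D ≠ 1)).comp t hg1
  have harc2 := (Real.hasDerivAt_arcsin (by linarith : q*C/D ≠ -1) (by linarith : q*C/D ≠ 1)).comp t hg2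
  have harc1' : HasDerivAt (fun u : ℝ => Real.arcsin (q / Real.sqrt (Real.sin u^2+q^2)))
      (1 / Real.sqrt (1 - (q/D)^2) * ((0*D - q*(2*S*C/(2*D)))/D^2)) t := harc1
  have harc2' : HasDerivAt (fun u : ℝ => Real.arcsin (q*Real.cos u / Real.sqrt (Real.sin u^2+q^2)))
      (1 / Real.sqrt (1 - (q*C/D)^2) * ((q*(-S)*D - q*C*(2*S*C/(2*D)))/D^2)) t := harc2
  have htot := harc1'.sub harc2'
  refine htot.congr_deriv ?_
  symm
  have hs1 : Real.sqrt (1 - (q/D)^2) = S/D := by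
    rw [show 1 - (q/D)^2 = (S/D)^2 by field_simp; linarith]
    exact Real.sqrt_sq (by positivity)
  have hs2 : Real.sqrt (1 - (q*C/D)^2) = S*w/D := by
    rw [show 1 - (q*C/D)^2 = (S*w/D)^2 by field_simp; nlinarith]
    exact Real.sqrt_sq (by positivity)
  rw [hs1, hs2, ← hD2]
  field_simp
  ring_nf
  linear_combination (q*S)*hw2 - (q*S)*hD2 - (q*S)*h1
lemma M_E_deriv (q w t : ℝ) (hq : 0 < q)
    (hS : 0 < Real.sin t) (hC : 0 < Real.cos t) (hw2 : w^2 = 1+q^2) :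
    HasDerivAt (fun u : ℝ => q*(w - Real.cos u)/(Real.sin u^2+q^2))
      (q*Real.sin t*(w-Real.cos t)^2/(Real.sin t^2+q^2)^2) t := by
  set S := Real.sin t with hSdef
  set C := Real.cos t with hCdef
  have h1 : S^2 + C^2 = 1 := Real.sin_sq_add_cos_sq t
  have hD0 : (0:ℝ) < S^2+q^2 := by positivity
  have hIn : HasDerivAt (fun u : ℝ => Real.sin u^2 + q^2) (2*S*C) t := by
    have h := ((Real.hasDerivAt_sin t).pow 2).add_const (q^2)
    simpa using h
  have hnum : HasDerivAt (fun u : ℝ => q*(w - Real.cos u)) (q*S) t := by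
    have h := ((Real.hasDerivAt_cos t).const_sub w).const_mul q
    simpa using h
  have h := hnum.div hIn (ne_of_gt hD0)
  refine h.congr_deriv ?_
  symm
  field_simp
  rw [← hSdef, ← hCdef]
  ring_nf
  linear_combination (S^2+q^2)^2 * hw2 - (S^2+q^2)^2 * h1
theorem spherical_triangle_area_div_sin_strictMono (q : ℝ) (hq : 0 < q) :
    StrictMonoOn (fun t : ℝ =>
      (∫ p in {p : ℝ × ℝ | 0 ≤ p.1 ∧ 0 ≤ p.2 ∧ p.1 / Real.tan t + p.2 / q ≤ 1},
        (1 + p.1 ^ 2 + p.2 ^ 2) ^ (-(3 / 2 : ℝ))) / Real.sin t)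
      (Set.Ioo 0 (Real.pi / 2)) := by
  have hπ : (0:ℝ) < Real.pi/2 := by positivity
  set w := Real.sqrt (1+q^2) with hwdef
  have hw2 : w^2 = 1+q^2 := Real.sq_sqrt (by positivity)
  have hw0 : 0 < w := Real.sqrt_pos.2 (by positivity)
  have hw1 : 1 < w := by nlinarith
  set A : ℝ → ℝ := fun t => Real.arcsin (q / Real.sqrt (Real.sin t^2+q^2))
      - Real.arcsin (q*Real.cos t / Real.sqrt (Real.sin t^2+q^2)) with hA
  set E : ℝ → ℝ := fun t => q*(w - Real.cos t)/(Real.sin t^2+q^2) with hE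
  set ψ : ℝ → ℝ := fun t => E t * Real.sin t - A t * Real.cos t with hψdef
  have hSC : ∀ t ∈ Set.Ioo (0:ℝ) (Real.pi/2), 0 < Real.sin t ∧ 0 < Real.cos t := by
    intro t ht
    obtain ⟨ht1, ht2⟩ := ht
    exact ⟨Real.sin_pos_of_pos_of_lt_pi ht1 (by linarith [Real.pi_pos]),
      Real.cos_pos_of_mem_Ioo ⟨by linarith [Real.pi_pos], ht2⟩⟩
  have hAcont : Continuous A := by
    apply Continuous.sub
    · exact Real.continuous_arcsin.comp
        (Continuous.div continuous_const (by fun_prop) (fun t => by positivity))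
    · exact Real.continuous_arcsin.comp
        (Continuous.div (by fun_prop) (by fun_prop) (fun t => by positivity))
  have hEcont : Continuous E :=
    Continuous.div (by fun_prop) (by fun_prop) (fun t => by positivity)
  have hψcont : Continuous ψ := (hEcont.mul Real.continuous_sin).sub (hAcont.mul Real.continuous_cos)
  have hAnonneg : ∀ t ∈ Set.Ioo (0:ℝ) (Real.pi/2), 0 ≤ A t := by
    intro t ht
    obtain ⟨hS, hC⟩ := hSC t ht
    have hD : (0:ℝ) < Real.sqrt (Real.sin t^2+q^2) := Real.sqrt_pos.2 (by positivity)
    have harg : q*Real.cos t / Real.sqrt (Real.sin t^2+q^2) ≤ q / Real.sqrt (Real.sin t^2+q^2) := by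
      gcongr
      nlinarith [Real.cos_le_one t]
    simp only [hA, sub_nonneg]
    exact Real.monotone_arcsin harg
  have hψderiv : ∀ t ∈ Set.Ioo (0:ℝ) (Real.pi/2),
      HasDerivAt ψ (q*Real.sin t*(w-Real.cos t)^2/(Real.sin t^2+q^2)^2 * Real.sin t
        + A t * Real.sin t) t := by
    intro t ht
    obtain ⟨hS, hC⟩ := hSC t ht
    have hψd := ((M_E_deriv q w t hq hS hC hw2).mul (Real.hasDerivAt_sin t)).sub
      ((M_A_deriv q w t hq hw0 hw2 hS hC).mul (Real.hasDerivAt_cos t))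
    refine hψd.congr_deriv ?_
    symm
    simp only [hA, hE]
    ring
  have hψ0 : ψ 0 = 0 := by
    simp only [hψdef, hE, hA, Real.sin_zero, Real.cos_zero]
    norm_num [Real.sqrt_sq hq.le, div_self (ne_of_gt hq)]
  have hψpos : ∀ t ∈ Set.Ioo (0:ℝ) (Real.pi/2), 0 < ψ t := by
    have hmono : StrictMonoOn ψ (Set.Ico 0 (Real.pi/2)) := by
      apply strictMonoOn_of_deriv_pos (convex_Ico _ _) hψcont.continuousOn
      intro x hx
      rw [interior_Ico] at hx
      obtain ⟨hS, hC⟩ := hSC x hx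
      rw [(hψderiv x hx).deriv]
      have h1 : 0 < q*Real.sin x*(w-Real.cos x)^2/(Real.sin x^2+q^2)^2 * Real.sin x := by
        have : 0 < w - Real.cos x := by nlinarith [Real.cos_le_one x]
        positivity
      exact add_pos_of_pos_of_nonneg h1 (mul_nonneg (hAnonneg x hx) hS.le)
    intro t ht
    have := hmono ⟨le_refl 0, hπ⟩ ⟨ht.1.le, ht.2⟩ ht.1
    rwa [hψ0] at this
  have hmodel : StrictMonoOn (fun t => A t / Real.sin t) (Set.Ioo 0 (Real.pi/2)) := by
    apply strictMonoOn_of_deriv_pos (convex_Ioo _ _)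
    · apply ContinuousOn.div hAcont.continuousOn Real.continuous_sin.continuousOn
      intro x hx
      exact ne_of_gt (hSC x hx).1
    · intro x hx
      rw [interior_Ioo] at hx
      obtain ⟨hS, hC⟩ := hSC x hx
      have hd : HasDerivAt (fun t => A t / Real.sin t)
          ((E x * Real.sin x - A x * Real.cos x)/(Real.sin x)^2) x := by
        have := (M_A_deriv q w x hq hw0 hw2 hS hC).div (Real.hasDerivAt_sin x) (ne_of_gt hS)
        exact this
      rw [hd.deriv]
      exact div_pos (hψpos x hx) (by positivity)
  have key : ∀ t ∈ Set.Ioo (0:ℝ) (Real.pi/2),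
      (∫ p in {p : ℝ × ℝ | 0 ≤ p.1 ∧ 0 ≤ p.2 ∧ p.1 / Real.tan t + p.2 / q ≤ 1},
        (1 + p.1 ^ 2 + p.2 ^ 2) ^ (-(3 / 2 : ℝ))) = A t := by
    intro t ht
    obtain ⟨hS, hC⟩ := hSC t ht
    have htan : 0 < Real.tan t := Real.tan_pos_of_pos_of_lt_pi_div_two ht.1 ht.2
    rw [area_eq_iterated q (Real.tan t) hq htan, Real.tan_eq_sin_div_cos]
    exact outer_eval q (Real.sin t) (Real.cos t) hq hS hC (Real.sin_sq_add_cos_sq t)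
  intro a ha b hb hab
  have h := hmodel ha hb hab
  simpa only [key a ha, key b hb] using h
end
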